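/- Let V = {1,…,n} and let λ = (λ_1,…,λ_k) be an integer sequence with 0 < λ_1 < ⋯ < λ_k ≤ n. If the symmetric hypergraph 𝓗(λ) is minimal transversal-free, then λ_{i+1} − λ_i ≤ λ_1 for all i = 1,…,k−1. -/

import Mathlib

open Finset

/-- An `H`-move in hypergraph NIM: strictly decrease every pile in `H`, keep others. -/
def HMove {n : ℕ} (H : Finset (Fin n)) (x x' : Fin n → ℕ) : Prop :=
  (∀ i ∈ H, x' i < x i) ∧ ∀ i ∉ H, x' i = x i

/-- A move in `NIM_𝓗`: an `H`-move for some hyperedge `H ∈ 𝓗`. -/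
def Move {n : ℕ} (F : Set (Finset (Fin n))) (x x' : Fin n → ℕ) : Prop :=
  ∃ H ∈ F, HMove H x x'

/-- Minimal excludant of a set of naturals. -/
noncomputable def mex (S : Set ℕ) : ℕ := sInf {g : ℕ | g ∉ S}

/-- The Sprague–Grundy function of `NIM_𝓗`, defined by well-founded recursion.
(The guard `∑ x' < ∑ x` is automatic whenever `∅ ∉ 𝓗`.) -/
noncomputable def grundy {n : ℕ} (F : Set (Finset (Fin n))) (x : Fin n → ℕ) : ℕ :=
  mex {g : ℕ | ∃ x', ∃ _h : Move F x x' ∧ (∑ i, x' i) < ∑ i, x i, grundy F x' = g}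
termination_by ∑ i, x i
decreasing_by exact _h.2

/-- `N` consecutive moves are possible from `x`: there are hyperedges `H¹,…,H^N ∈ 𝓗`
whose partial sums of characteristic vectors stay `≤ x`. -/
def TetrisReach {n : ℕ} (F : Set (Finset (Fin n))) (x : Fin n → ℕ) (N : ℕ) : Prop :=
  ∃ f : ℕ → Finset (Fin n), (∀ j < N, f j ∈ F) ∧
    ∀ j < N, ∀ i, (∑ l ∈ Finset.range (j + 1), if i ∈ f l then 1 else 0) ≤ x i

/-- The Tetris function: the largest `N` with `TetrisReach`. -/
noncomputable def tetris {n : ℕ} (F : Set (Finset (Fin n))) (x : Fin n → ℕ) : ℕ :=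
  sSup {N | TetrisReach F x N}

/-- `m(x)`: the minimum pile size. -/
noncomputable def mval {n : ℕ} (x : Fin n → ℕ) : ℕ := sInf (Set.range x)

/-- `y_𝓗(x) = 𝒯_𝓗(x − m(x)e) + 1`. -/
noncomputable def yval {n : ℕ} (F : Set (Finset (Fin n))) (x : Fin n → ℕ) : ℕ :=
  tetris F (fun i => x i - mval x) + 1

/-- `v_𝓗(x)`. -/
noncomputable def vval {n : ℕ} (F : Set (Finset (Fin n))) (x : Fin n → ℕ) : ℕ :=
  Nat.choose (yval F x) 2 + ((mval x - Nat.choose (yval F x) 2 - 1) % yval F x)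

/-- A position is long if `m(x) ≤ C(y_𝓗(x), 2)`. -/
noncomputable def IsLong {n : ℕ} (F : Set (Finset (Fin n))) (x : Fin n → ℕ) : Prop :=
  mval x ≤ Nat.choose (yval F x) 2

/-- The Jenkyns–Mayberry function `𝒰_𝓗`. -/
noncomputable def jmU {n : ℕ} (F : Set (Finset (Fin n))) (x : Fin n → ℕ) : ℕ :=
  if mval x ≤ Nat.choose (yval F x) 2 then tetris F x else vval F x

/-- `𝓗` is a JM hypergraph if its SG function is given by the JM formula. -/
def IsJM {n : ℕ} (F : Set (Finset (Fin n))) : Prop :=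
  ∀ x : Fin n → ℕ, grundy F x = jmU F x

/-- `T` is a transversal of `𝓗` if it meets every hyperedge. -/
def IsTransversal {n : ℕ} (F : Set (Finset (Fin n))) (T : Finset (Fin n)) : Prop :=
  ∀ H ∈ F, (T ∩ H).Nonempty

/-- `𝓗` is transversal-free if no hyperedge is a transversal. -/
def TransversalFree {n : ℕ} (F : Set (Finset (Fin n))) : Prop :=
  ∀ H ∈ F, ¬ IsTransversal F H

/-- The induced subhypergraph `𝓗_S`. -/
def inducedH {n : ℕ} (F : Set (Finset (Fin n))) (S : Finset (Fin n)) : Set (Finset (Fin n)) :=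
  {H | H ∈ F ∧ H ⊆ S}

/-- `𝓗` is minimal transversal-free. -/
def MinTransversalFree {n : ℕ} (F : Set (Finset (Fin n))) : Prop :=
  TransversalFree F ∧
    ∀ S : Finset (Fin n), S ⊂ Finset.univ → (inducedH F S).Nonempty →
      ¬ TransversalFree (inducedH F S)

/-- The symmetric hypergraph `𝓗(λ)` of a spectrum `λ₁ < ⋯ < λ_k` (1-indexed). -/
def Hlambda {n : ℕ} (k : ℕ) (gl : ℕ → ℕ) : Set (Finset (Fin n)) :=
  {H | ∃ j, 1 ≤ j ∧ j ≤ k ∧ H.card = gl j}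

/-- If `𝓗(λ)` is minimal transversal-free, then `λ_{i+1} − λ_i ≤ λ_1` for all `i`. -/
theorem Hlambda_minTransversalFree_gap
    (n k : ℕ) (gl : ℕ → ℕ) (hk : 1 ≤ k) (hpos : 0 < gl 1)
    (hmono : ∀ i, 1 ≤ i → i < k → gl i < gl (i + 1)) (hle : gl k ≤ n)
    (hmin : MinTransversalFree (Hlambda (n := n) k gl)) :
    ∀ i, 1 ≤ i → i < k → gl (i + 1) - gl i ≤ gl 1 := by
  have hmono' : ∀ a, 1 ≤ a → ∀ b, a ≤ b → b ≤ k → gl a ≤ gl b := by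
    intro a ha b
    induction b with
    | zero => intro h1 h2; omega
    | succ b ih =>
      intro hab hbk
      rcases Nat.lt_or_ge a (b + 1) with h | h
      · have h1 : gl a ≤ gl b := ih (by omega) (by omega)
        have h2 : gl b < gl (b + 1) := hmono b (by omega) (by omega)
        omega
      · have : a = b + 1 := by omega
        subst this; exact le_rfl
  intro i hi1 hik
  by_contra hgap
  push_neg at hgap
  have hii : gl i < gl (i + 1) := hmono i hi1 hik
  have hs : gl i + gl 1 < gl (i + 1) := by omega
  have hkn : gl (i + 1) ≤ n := le_trans (hmono' (i + 1) (by omega) k (by omega) le_rfl) hle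
  set s := gl i + gl 1 with hsdef
  have hsn : s < n := by omega
  obtain ⟨S, hSsub, hScard⟩ := Finset.exists_subset_card_eq (s := (Finset.univ : Finset (Fin n))) (n := s)
    (by simpa using le_of_lt hsn)
  have hSne : S ⊂ Finset.univ := by
    rw [Finset.ssubset_univ_iff]
    intro h
    rw [h] at hScard
    simp at hScard
    omega
  obtain ⟨T, hTS, hTcard⟩ := Finset.exists_subset_card_eq (s := S) (n := gl i) (by omega)
  have hTmem : T ∈ Hlambda (n := n) k gl ∧ T ⊆ S := ⟨⟨i, hi1, le_of_lt hik, hTcard⟩, hTS⟩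
  apply hmin.2 S hSne ⟨T, hTmem⟩
  intro H' hH'
  obtain ⟨⟨j, hj1, hjk, hcard⟩, hHS⟩ := hH'
  have hcardle : gl j ≤ s := by
    have := Finset.card_le_card hHS
    omega
  have hji : gl j ≤ gl i := by
    rcases le_or_gt j i with h | h
    · exact hmono' j hj1 i h (le_of_lt hik)
    · have : gl (i + 1) ≤ gl j := hmono' (i + 1) (by omega) j h hjk
      omega
  have hdiff : gl 1 ≤ (S \ H').card := by
    rw [Finset.card_sdiff_of_subset hHS]
    omega
  obtain ⟨G, hGsub, hGcard⟩ := Finset.exists_subset_card_eq (s := S \ H') (n := gl 1) hdiff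
  intro htrans
  have hG : G ∈ inducedH (Hlambda (n := n) k gl) S :=
    ⟨⟨1, le_rfl, hk, hGcard⟩, hGsub.trans (Finset.sdiff_subset)⟩
  obtain ⟨x, hx⟩ := htrans G hG
  rw [Finset.mem_inter] at hx
  have := hGsub hx.2
  rw [Finset.mem_sdiff] at this
  exact this.2 hx.1
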